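/- Let Z ≥ 1 be a natural number and let θ be a real number with 0 ≤ θ ≤ Z^Z/(Z+1)^(Z+1). Then the series Σ_{i=1}^{∞} C(i,Z)·θ^i is summable, where C(i,Z) = binomial((Z+1)·i, i)/(Z·i + 1) is the Pfaff–Fuss–Catalan number. -/

import Mathlib

open Real

private lemma fc_pow_identity (Z i : ℕ) (z x E : ℝ) (hz : 0 < z) (hE : 0 < E) :
    ((z+1)*x/E)^((Z+1)*i) * (z^Z/(z+1)^(Z+1))^i = (x/E)^i * ((z*x)/E)^(Z*i) := by
  have h1 : (0:ℝ) < z + 1 := by linarith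
  have e1 : ((z+1)*x/E)^((Z+1)*i) = (z+1)^((Z+1)*i) * ((x/E)^(Z*i) * (x/E)^i) := by
    rw [mul_div_assoc, mul_pow, ← pow_add]; congr 2; ring
  have e2 : (z^Z/(z+1)^(Z+1))^i = z^(Z*i)/(z+1)^((Z+1)*i) := by
    rw [div_pow, ← pow_mul, ← pow_mul]
  have e3 : ((z*x)/E)^(Z*i) = z^(Z*i) * (x/E)^(Z*i) := by rw [mul_div_assoc, mul_pow]
  have hA : (z+1)^((Z+1)*i) ≠ 0 := by positivity
  rw [e1, e2, e3, mul_comm, ← mul_assoc, div_mul_cancel₀ _ hA]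
  ring

/-- Key bound: Fuss–Catalan binomial times θ_max^i is at most C/√i. -/
private lemma fc_bound (Z : ℕ) (hZ : 1 ≤ Z) : ∃ C : ℝ, 0 < C ∧ ∀ i : ℕ, 1 ≤ i →
    (Nat.choose ((Z + 1) * i) i : ℝ) * ((Z : ℝ) ^ Z / ((Z : ℝ) + 1) ^ (Z + 1)) ^ i
      ≤ C / Real.sqrt i := by
  obtain ⟨a, ha, hab⟩ := Stirling.stirlingSeq'_bounded_by_pos_constant
  have hs1 : 0 < Stirling.stirlingSeq 1 := Stirling.stirlingSeq'_pos 0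
  refine ⟨Stirling.stirlingSeq 1 / (a * a), by positivity, ?_⟩
  intro i hi
  set z : ℝ := (Z : ℝ) with hzdef
  have hz : (1:ℝ) ≤ z := by rw [hzdef]; exact_mod_cast hZ
  have hz0 : (0:ℝ) < z := by linarith
  have hx : (0:ℝ) < (i:ℝ) := by exact_mod_cast hi
  set x : ℝ := (i:ℝ) with hxdef
  set E : ℝ := Real.exp 1 with hEdef
  have hE : 0 < E := Real.exp_pos 1
  -- factorial formula
  have hfact : ∀ n : ℕ, 1 ≤ n →
      (n.factorial : ℝ) = Stirling.stirlingSeq n * (Real.sqrt (2*n) * ((n:ℝ)/E)^n) := by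
    intro n hn
    have hn0 : (0:ℝ) < (n:ℝ) := by exact_mod_cast hn
    rw [Stirling.stirlingSeq, div_mul_cancel₀]
    positivity
  have hNi : i ≤ (Z+1)*i := Nat.le_mul_of_pos_left i (by omega)
  have hsub : (Z+1)*i - i = Z*i := by
    have : (Z+1)*i = Z*i + i := by ring
    omega
  have hN1 : 1 ≤ (Z+1)*i := by nlinarith
  have hm1 : 1 ≤ Z*i := by nlinarith
  -- stirlingSeq bounds
  have hsub_bound : ∀ n : ℕ, 1 ≤ n → Stirling.stirlingSeq n ≤ Stirling.stirlingSeq 1 := by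
    intro n hn
    obtain ⟨n', rfl⟩ : ∃ n', n = n' + 1 := ⟨n - 1, by omega⟩
    exact Stirling.stirlingSeq'_antitone (Nat.zero_le n')
  have hslow : ∀ n : ℕ, 1 ≤ n → a ≤ Stirling.stirlingSeq n := by
    intro n hn
    obtain ⟨n', rfl⟩ : ∃ n', n = n' + 1 := ⟨n - 1, by omega⟩
    exact hab n'
  -- abbreviations
  set dN : ℝ := Real.sqrt (2*((Z+1)*i : ℕ)) * ((((Z+1)*i : ℕ):ℝ)/E)^((Z+1)*i) with hdN
  set di : ℝ := Real.sqrt (2*(i:ℝ)) * ((i:ℝ)/E)^i with hdi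
  set dm : ℝ := Real.sqrt (2*((Z*i : ℕ):ℝ)) * ((((Z*i : ℕ)):ℝ)/E)^(Z*i) with hdm
  have hdN0 : 0 < dN := by
    have : (0:ℝ) < (((Z+1)*i : ℕ):ℝ) := by exact_mod_cast hN1
    positivity
  have hdi0 : 0 < di := by positivity
  have hdm0 : 0 < dm := by
    have : (0:ℝ) < (((Z*i : ℕ)):ℝ) := by exact_mod_cast hm1
    positivity
  -- choose bound
  have hchoose : (Nat.choose ((Z + 1) * i) i : ℝ) ≤
      (Stirling.stirlingSeq 1 * dN) / ((a * di) * (a * dm)) := by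
    rw [Nat.cast_choose ℝ hNi, hsub, hfact _ hN1, hfact _ hi, hfact _ hm1]
    apply div_le_div₀ (by positivity)
    · exact mul_le_mul_of_nonneg_right (hsub_bound _ hN1) hdN0.le
    · positivity
    · have h1 := mul_le_mul_of_nonneg_right (hslow _ hi) hdi0.le
      have h2 := mul_le_mul_of_nonneg_right (hslow _ hm1) hdm0.le
      have hsi : 0 < Stirling.stirlingSeq i := ha.trans_le (hslow i hi)
      calc a * di * (a * dm) ≤ Stirling.stirlingSeq i * di * (a * dm) :=
            mul_le_mul_of_nonneg_right h1 (by positivity)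
        _ ≤ Stirling.stirlingSeq i * di * (Stirling.stirlingSeq (Z*i) * dm) :=
            mul_le_mul_of_nonneg_left h2 (by positivity)
  set θm : ℝ := z ^ Z / (z + 1) ^ (Z + 1) with hθm
  have hθm0 : 0 < θm := div_pos (pow_pos hz0 _) (pow_pos (by linarith) _)
  have key : (Nat.choose ((Z + 1) * i) i : ℝ) * θm ^ i ≤
      (Stirling.stirlingSeq 1 * dN) / ((a * di) * (a * dm)) * θm ^ i :=
    mul_le_mul_of_nonneg_right hchoose (by positivity)
  -- now compute dN * θm^i = (√(2N)/(√(2i)√(2m))) * di * dm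
  have hcastN : (((Z+1)*i : ℕ):ℝ) = (z+1) * x := by push_cast; ring
  have hcastm : (((Z*i : ℕ)):ℝ) = z * x := by push_cast; ring
  have hpowid : ((((Z+1)*i : ℕ):ℝ)/E)^((Z+1)*i) * θm ^ i
      = (x/E)^i * (((((Z*i : ℕ)):ℝ))/E)^(Z*i) := by
    rw [hcastN, hcastm, hθm]
    exact fc_pow_identity Z i z x E hz0 hE
  -- sqrt bound : √(2N) * √x ≤ √(2i) * √(2m)
  have hsqrt : Real.sqrt (2*((Z+1)*i : ℕ)) * Real.sqrt x
      ≤ Real.sqrt (2*(i:ℝ)) * Real.sqrt (2*((Z*i : ℕ):ℝ)) := by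
    rw [hcastN, hcastm, ← Real.sqrt_mul (by positivity), ← Real.sqrt_mul (by positivity)]
    apply Real.sqrt_le_sqrt
    simp only [hxdef]
    have hx' : (0:ℝ) ≤ (i:ℝ) := by positivity
    nlinarith [mul_nonneg (mul_nonneg hx' hx') (sub_nonneg.mpr hz)]
  -- conclude
  have hfinal : (Stirling.stirlingSeq 1 * dN) / ((a * di) * (a * dm)) * θm ^ i
      ≤ Stirling.stirlingSeq 1 / (a * a) / Real.sqrt x := by
    rw [div_mul_eq_mul_div, div_le_div_iff₀ (by positivity) (by positivity)]
    have expand : Stirling.stirlingSeq 1 * dN * θm ^ i * Real.sqrt x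
        = Stirling.stirlingSeq 1 *
          ((Real.sqrt (2*((Z+1)*i : ℕ)) * Real.sqrt x) *
            ((x/E)^i * (((((Z*i : ℕ)):ℝ))/E)^(Z*i))) := by
      rw [hdN]
      linear_combination (Stirling.stirlingSeq 1 * Real.sqrt (2*(((Z+1)*i : ℕ):ℝ)) *
        Real.sqrt x) * hpowid
    rw [expand]
    have hrhs : Stirling.stirlingSeq 1 / (a * a) * (a * di * (a * dm))
        = Stirling.stirlingSeq 1 *
          ((Real.sqrt (2*(i:ℝ)) * Real.sqrt (2*((Z*i : ℕ):ℝ))) *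
            ((x/E)^i * (((((Z*i : ℕ)):ℝ))/E)^(Z*i))) := by
      rw [hdi, hdm]
      field_simp
      ring
    rw [hrhs]
    apply mul_le_mul_of_nonneg_left _ hs1.le
    apply mul_le_mul_of_nonneg_right hsqrt
    have hm0 : (0:ℝ) < (((Z*i : ℕ)):ℝ) := by exact_mod_cast hm1
    positivity
  exact key.trans hfinal

theorem stmt_8 (Z : ℕ) (hZ : 1 ≤ Z) (θ : ℝ) (hθ0 : 0 ≤ θ)
    (hθ : θ ≤ (Z : ℝ) ^ Z / ((Z : ℝ) + 1) ^ (Z + 1)) :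
    Summable (fun i : ℕ =>
      ((Nat.choose ((Z + 1) * (i + 1)) (i + 1) : ℝ) / ((Z : ℝ) * (i + 1) + 1)) *
        θ ^ (i + 1)) := by
  obtain ⟨C, hC, hbound⟩ := fc_bound Z hZ
  have hz1 : (1:ℝ) ≤ (Z:ℝ) := by exact_mod_cast hZ
  have hz0 : (0:ℝ) < (Z:ℝ) := by linarith
  have hθm0 : (0:ℝ) ≤ (Z : ℝ) ^ Z / ((Z : ℝ) + 1) ^ (Z + 1) := by positivity
  -- comparison series
  have hsum : Summable (fun i : ℕ => C * (((i:ℝ)+1) ^ (-(3/2) : ℝ))) := by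
    apply Summable.mul_left
    have h := Real.summable_nat_rpow.mpr (show (-(3/2):ℝ) < -1 by norm_num)
    have h2 := (summable_nat_add_iff 1).mpr h
    exact h2.congr fun n => by push_cast; ring_nf
  apply Summable.of_nonneg_of_le _ _ hsum
  · intro i
    positivity
  · intro i
    have hi1 : (0:ℝ) < (i:ℝ) + 1 := by positivity
    have hrw : (((i:ℝ)+1) ^ (-(3/2) : ℝ)) = 1 / (((i:ℝ)+1) * Real.sqrt ((i:ℝ)+1)) := by
      rw [show (-(3/2):ℝ) = -(1 + 1/2) by norm_num, Real.rpow_neg hi1.le,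
        Real.rpow_add hi1, Real.rpow_one, ← Real.sqrt_eq_rpow]
      rw [one_div]
    have hgoal : ((Z:ℝ) * ((i:ℕ)+1 : ℕ) + 1) = (Z:ℝ) * ((i:ℝ)+1) + 1 := by push_cast; ring
    rw [hrw]
    have hb := hbound (i+1) (by omega)
    have hcast : ((i+1:ℕ):ℝ) = (i:ℝ)+1 := by push_cast; ring
    rw [hcast] at hb
    have hθpow : θ ^ (i+1) ≤ ((Z : ℝ) ^ Z / ((Z : ℝ) + 1) ^ (Z + 1)) ^ (i+1) :=
      pow_le_pow_left₀ hθ0 hθ (i+1)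
    have hden : (i:ℝ) + 1 ≤ (Z:ℝ) * ((i:ℝ)+1) + 1 := by nlinarith
    calc (Nat.choose ((Z + 1) * (i + 1)) (i + 1) : ℝ) / ((Z : ℝ) * ((i:ℝ)+1) + 1) * θ ^ (i+1)
        ≤ (Nat.choose ((Z + 1) * (i + 1)) (i + 1) : ℝ) / ((i:ℝ)+1) *
            ((Z : ℝ) ^ Z / ((Z : ℝ) + 1) ^ (Z + 1)) ^ (i+1) := by
          apply mul_le_mul _ hθpow (by positivity) (by positivity)
          apply div_le_div_of_nonneg_left (by positivity) (by positivity) hden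
      _ = (Nat.choose ((Z + 1) * (i + 1)) (i + 1) : ℝ) *
            ((Z : ℝ) ^ Z / ((Z : ℝ) + 1) ^ (Z + 1)) ^ (i+1) / ((i:ℝ)+1) := by ring
      _ ≤ C / Real.sqrt ((i:ℝ)+1) / ((i:ℝ)+1) :=
          (div_le_div_iff_of_pos_right hi1).mpr hb
      _ = C * (1 / (((i:ℝ)+1) * Real.sqrt ((i:ℝ)+1))) := by
          rw [div_div]
          rw [mul_one_div, mul_comm (Real.sqrt ((i:ℝ)+1))]
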